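/- Let a be odd, n ≥ 2 even, and set ε = ⌊a/2⌋. Let U^a_n be the set of vertices of Π^a_n that agree with the constant string ε̂ = εε⋯ε in all positions except possibly one position i (1 ≤ i ≤ n), where the letter is ε+1 with i even, or ε−1 with i odd. Then the center of Π^a_n equals U^a_n. -/

import Mathlib

/-- Strings of length `n` over the alphabet `{0,1,…,a}` in which the letter `a`
occurs only immediately after a `0` (i.e. `a` appears only inside blocks `0a`). -/
def MetallicOK (a n : ℕ) (α : Fin n → Fin (a + 1)) : Prop :=
  ∀ i : Fin n, (α i : ℕ) = a →
    ∃ j : Fin n, (j : ℕ) + 1 = (i : ℕ) ∧ (α j : ℕ) = 0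

instance (a n : ℕ) : DecidablePred (MetallicOK a n) := fun α => by
  unfold MetallicOK; infer_instance

/-- Vertices of the metallic cube `Π^a_n`. -/
abbrev MetallicVertex (a n : ℕ) : Type :=
  {α : Fin n → Fin (a + 1) // MetallicOK a n α}

/-- The metallic cube `Π^a_n`: two strings are adjacent iff `Σ_i |α_i - β_i| = 1`. -/
def metallicCube (a n : ℕ) : SimpleGraph (MetallicVertex a n) where
  Adj u v := (∑ i : Fin n, Nat.dist (u.1 i : ℕ) (v.1 i : ℕ)) = 1
  symm := by
    constructor
    intro u v h
    simpa [Nat.dist_comm] using h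
  loopless := by
    constructor
    intro u h
    simp [Nat.dist_self] at h

instance (a n : ℕ) : DecidableRel (metallicCube a n).Adj := fun u v =>
  inferInstanceAs (Decidable ((∑ i : Fin n, Nat.dist (u.1 i : ℕ) (v.1 i : ℕ)) = 1))

/-- The eccentricity of a vertex of the metallic cube: the maximum distance
from `v` to any vertex. -/
noncomputable def ecc (a n : ℕ) (v : MetallicVertex a n) : ℕ :=
  Finset.univ.sup fun u => (metallicCube a n).dist v u

namespace MetAux

variable {a n : ℕ}

/-- ℓ¹ distance between two vertices. -/
def l1 (u v : MetallicVertex a n) : ℕ := ∑ i : Fin n, Nat.dist (u.1 i : ℕ) (v.1 i : ℕ)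

lemma l1_comm (u v : MetallicVertex a n) : l1 u v = l1 v u := by
  unfold l1; simp [Nat.dist_comm]

lemma l1_eq_zero {u v : MetallicVertex a n} (h : l1 u v = 0) : u = v := by
  unfold l1 at h
  rw [Finset.sum_eq_zero_iff] at h
  apply Subtype.ext; funext i
  have := h i (Finset.mem_univ i)
  have : (u.1 i : ℕ) = (v.1 i : ℕ) := Nat.eq_of_dist_eq_zero this
  exact Fin.ext this

lemma l1_triangle (u w v : MetallicVertex a n) : l1 u v ≤ l1 u w + l1 w v := by
  unfold l1
  rw [← Finset.sum_add_distrib]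
  exact Finset.sum_le_sum fun i _ => Nat.dist.triangle_inequality _ _ _

/-- One-step improvement towards the target. -/
lemma exists_step {u v : MetallicVertex a n} {k : ℕ} (h : l1 u v = k + 1) :
    ∃ w : MetallicVertex a n, (metallicCube a n).Adj u w ∧ l1 w v = k := by
  by_cases hd : ∃ i : Fin n, (v.1 i : ℕ) < (u.1 i : ℕ)
  · obtain ⟨i, hi⟩ := hd
    have hui : 1 ≤ (u.1 i : ℕ) := by omega
    set f : Fin n → Fin (a+1) := Function.update u.1 i ⟨(u.1 i : ℕ) - 1, by
      have := (u.1 i).2; omega⟩ with hf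
    have hfi : (f i : ℕ) = (u.1 i : ℕ) - 1 := by simp [hf]
    have hfj : ∀ j, j ≠ i → f j = u.1 j := by
      intro j hj; simp [hf, Function.update_of_ne hj]
    have hok : MetallicOK a n f := by
      intro j hj
      have hji : j ≠ i := by
        intro he; subst he; rw [hfi] at hj; have := (u.1 j).2; omega
      rw [hfj j hji] at hj
      obtain ⟨j', hj1, hj2⟩ := u.2 j hj
      refine ⟨j', hj1, ?_⟩
      have hj'i : j' ≠ i := by
        intro he; subst he; omega
      rw [hfj j' hj'i]; exact hj2
    refine ⟨⟨f, hok⟩, ?_, ?_⟩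
    · show (∑ j : Fin n, Nat.dist (u.1 j : ℕ) (f j : ℕ)) = 1
      rw [Finset.sum_eq_single_of_mem i (Finset.mem_univ i)]
      · rw [hfi]; simp [Nat.dist]; omega
      · intro j _ hj; rw [hfj j hj]; exact Nat.dist_self _
    · show (∑ j : Fin n, Nat.dist (f j : ℕ) (v.1 j : ℕ)) = k
      unfold l1 at h
      have h1 : ∀ j ∈ Finset.univ, j ≠ i →
          Nat.dist (f j : ℕ) (v.1 j : ℕ) = Nat.dist (u.1 j : ℕ) (v.1 j : ℕ) := by
        intro j _ hj; rw [hfj j hj]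
      rw [← Finset.sum_erase_add _ _ (Finset.mem_univ i)] at h ⊢
      rw [Finset.sum_congr rfl (fun j hj => h1 j (Finset.mem_of_mem_erase hj)
        (Finset.ne_of_mem_erase hj))]
      rw [hfi]
      simp only [Nat.dist] at h ⊢
      omega
  · push_neg at hd
    have hne : ∃ i : Fin n, (u.1 i : ℕ) < (v.1 i : ℕ) := by
      by_contra hc
      push_neg at hc
      have : l1 u v = 0 := by
        unfold l1
        apply Finset.sum_eq_zero
        intro i _
        have h1 := hd i; have h2 := hc i
        simp [Nat.dist]; omega
      omega
    obtain ⟨i, hi⟩ := hne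
    have hva := (v.1 i).2
    set f : Fin n → Fin (a+1) := Function.update u.1 i ⟨(u.1 i : ℕ) + 1, by omega⟩ with hf
    have hfi : (f i : ℕ) = (u.1 i : ℕ) + 1 := by simp [hf]
    have hfj : ∀ j, j ≠ i → f j = u.1 j := by
      intro j hj; simp [hf, Function.update_of_ne hj]
    have hok : MetallicOK a n f := by
      intro j hj
      by_cases hji : j = i
      · subst hji
        rw [hfi] at hj
        have hvi : (v.1 j : ℕ) = a := by have := hd j; omega
        obtain ⟨j', hj1, hj2⟩ := v.2 j hvi
        have hj'i : j' ≠ j := by intro he; subst he; omega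
        refine ⟨j', hj1, ?_⟩
        rw [hfj j' hj'i]
        have := hd j'; omega
      · rw [hfj j hji] at hj
        obtain ⟨j', hj1, hj2⟩ := u.2 j hj
        by_cases hj'i : j' = i
        · exfalso
          subst hj'i
          -- u j = a, so v j = a (since u ≤ v), so v j' = 0, but u j' < v j' = 0
          have hvj : (v.1 j : ℕ) = a := by have := hd j; omega
          obtain ⟨j'', hj''1, hj''2⟩ := v.2 j hvj
          have : j'' = j' := by
            apply Fin.ext; omega
          subst this
          omega
        · exact ⟨j', hj1, by rw [hfj j' hj'i]; exact hj2⟩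
    refine ⟨⟨f, hok⟩, ?_, ?_⟩
    · show (∑ j : Fin n, Nat.dist (u.1 j : ℕ) (f j : ℕ)) = 1
      rw [Finset.sum_eq_single_of_mem i (Finset.mem_univ i)]
      · rw [hfi]; simp [Nat.dist]
      · intro j _ hj; rw [hfj j hj]; exact Nat.dist_self _
    · show (∑ j : Fin n, Nat.dist (f j : ℕ) (v.1 j : ℕ)) = k
      unfold l1 at h
      have h1 : ∀ j ∈ Finset.univ, j ≠ i →
          Nat.dist (f j : ℕ) (v.1 j : ℕ) = Nat.dist (u.1 j : ℕ) (v.1 j : ℕ) := by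
        intro j _ hj; rw [hfj j hj]
      rw [← Finset.sum_erase_add _ _ (Finset.mem_univ i)] at h ⊢
      rw [Finset.sum_congr rfl (fun j hj => h1 j (Finset.mem_of_mem_erase hj)
        (Finset.ne_of_mem_erase hj))]
      rw [hfi]
      simp only [Nat.dist] at h ⊢
      omega

lemma exists_walk : ∀ (k : ℕ) (u v : MetallicVertex a n), l1 u v = k →
    ∃ w : (metallicCube a n).Walk u v, w.length = k := by
  intro k
  induction k with
  | zero => intro u v h; have := l1_eq_zero h; subst this; exact ⟨SimpleGraph.Walk.nil, rfl⟩
  | succ k ih =>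
    intro u v h
    obtain ⟨w, hadj, hl⟩ := exists_step h
    obtain ⟨p, hp⟩ := ih w v hl
    exact ⟨SimpleGraph.Walk.cons hadj p, by simp [hp]⟩

lemma l1_le_walk_length {u v : MetallicVertex a n} (w : (metallicCube a n).Walk u v) :
    l1 u v ≤ w.length := by
  induction w with
  | nil => simp [l1, Nat.dist_self]
  | @cons x y z h p ih =>
    have := l1_triangle x y z
    have hxy : l1 x y = 1 := h
    simp only [SimpleGraph.Walk.length_cons]
    omega

lemma dist_eq (u v : MetallicVertex a n) : (metallicCube a n).dist u v = l1 u v := by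
  obtain ⟨w, hw⟩ := exists_walk (l1 u v) u v rfl
  apply le_antisymm
  · calc (metallicCube a n).dist u v ≤ w.length := SimpleGraph.dist_le w
      _ = l1 u v := hw
  · obtain ⟨p, hp⟩ := SimpleGraph.Reachable.exists_walk_length_eq_dist ⟨w⟩
    calc l1 u v ≤ p.length := l1_le_walk_length p
      _ = _ := hp

end MetAux


namespace MetAux

variable {a n : ℕ}

/-- Extension of a vertex to a function `ℕ → ℕ`. -/
def ext (v : MetallicVertex a n) (i : ℕ) : ℕ := if h : i < n then (v.1 ⟨i, h⟩ : ℕ) else 0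

lemma ext_le (v : MetallicVertex a n) (i : ℕ) : ext v i ≤ a := by
  unfold ext; split
  · exact Nat.lt_succ_iff.mp (v.1 _).2
  · omega

lemma ext_ok (v : MetallicVertex a n) (i : ℕ) (h : ext v i = a) (ha : 1 ≤ a) :
    1 ≤ i ∧ ext v (i - 1) = 0 := by
  unfold ext at h
  split at h
  · next hi =>
    obtain ⟨j, hj1, hj2⟩ := v.2 ⟨i, hi⟩ h
    simp only [Fin.val_mk] at hj1
    have hji : (j : ℕ) = i - 1 := by omega
    refine ⟨by omega, ?_⟩
    unfold ext
    have hlt : i - 1 < n := by omega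
    rw [dif_pos hlt, show (⟨i-1, hlt⟩ : Fin n) = j from Fin.ext (by simp [hji])]
    exact hj2
  · omega

lemma l1_eq_sum_range (u v : MetallicVertex a n) :
    l1 u v = ∑ i ∈ Finset.range n, Nat.dist (ext u i) (ext v i) := by
  unfold l1
  rw [← Fin.sum_univ_eq_sum_range (fun i => Nat.dist (ext u i) (ext v i)) n]
  apply Finset.sum_congr rfl
  intro i _
  unfold ext
  rw [dif_pos i.2, dif_pos i.2]

/-- Build a vertex from a function `ℕ → ℕ`. -/
def mk (f : ℕ → ℕ) (hle : ∀ i, f i ≤ a)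
    (hok : ∀ i, i < n → f i = a → 1 ≤ i ∧ f (i - 1) = 0) : MetallicVertex a n :=
  ⟨fun i => ⟨f i, Nat.lt_succ_of_le (hle i)⟩, by
    intro i hi
    obtain ⟨h1, h2⟩ := hok i i.2 hi
    exact ⟨⟨(i : ℕ) - 1, by omega⟩, by simp; omega, h2⟩⟩

lemma ext_mk (f : ℕ → ℕ) (hle : ∀ i, f i ≤ a)
    (hok : ∀ i, i < n → f i = a → 1 ≤ i ∧ f (i - 1) = 0) (i : ℕ) (hi : i < n) :
    ext (mk f hle hok) i = f i := by
  unfold ext mk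
  rw [dif_pos hi]

/-- Sum over an even range, in pairs. -/
lemma sum_pair (g : ℕ → ℕ) : ∀ m : ℕ,
    ∑ i ∈ Finset.range (2 * m), g i = ∑ k ∈ Finset.range m, (g (2 * k) + g (2 * k + 1)) := by
  intro m
  induction m with
  | zero => simp
  | succ m ih =>
    rw [show 2 * (m + 1) = (2 * m + 1) + 1 by ring]
    rw [Finset.sum_range_succ, Finset.sum_range_succ, Finset.sum_range_succ, ih]
    omega

/-- A function built from pair patterns. -/
def pairFun (P : ℕ → ℕ × ℕ) : ℕ → ℕ := fun i => if i % 2 = 0 then (P (i / 2)).1 else (P (i / 2)).2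

lemma pairFun_even (P : ℕ → ℕ × ℕ) (k : ℕ) : pairFun P (2 * k) = (P k).1 := by
  unfold pairFun; simp [Nat.mul_div_cancel_left, Nat.mul_mod_right]

lemma pairFun_odd (P : ℕ → ℕ × ℕ) (k : ℕ) : pairFun P (2 * k + 1) = (P k).2 := by
  unfold pairFun
  have h1 : (2 * k + 1) % 2 = 1 := by omega
  have h2 : (2 * k + 1) / 2 = k := by omega
  rw [h1, h2]; simp

lemma pairFun_ok (P : ℕ → ℕ × ℕ)
    (h1 : ∀ k, (P k).1 = a → 1 ≤ k ∧ (P (k - 1)).2 = 0)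
    (h2 : ∀ k, (P k).2 = a → (P k).1 = 0) :
    ∀ i, i < n → pairFun P i = a → 1 ≤ i ∧ pairFun P (i - 1) = 0 := by
  intro i _ hia
  unfold pairFun at hia ⊢
  by_cases hp : i % 2 = 0
  · rw [if_pos hp] at hia
    obtain ⟨hk1, hk2⟩ := h1 _ hia
    refine ⟨by omega, ?_⟩
    rw [if_neg (by omega), show (i - 1) / 2 = i / 2 - 1 by omega]
    exact hk2
  · rw [if_neg hp] at hia
    refine ⟨by omega, ?_⟩
    rw [if_pos (by omega), show (i - 1) / 2 = i / 2 by omega]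
    exact h2 _ hia

lemma noconsec {S : Finset ℕ} (hS2 : ∀ i ∈ S, 1 ≤ i) (hS3 : ∀ i ∈ S, i - 1 ∉ S)
    {i j : ℕ} (hi : i ∈ S) (hj : j ∈ S) (h : j = i + 1) : False := by
  apply hS3 j hj
  rw [show j - 1 = i by omega]
  exact hi

/-- Cardinality lemmas for the set of positions where `u = a`. -/
lemma card_le_half {m : ℕ} (S : Finset ℕ)
    (hS1 : ∀ i ∈ S, i < 2 * m) (hS2 : ∀ i ∈ S, 1 ≤ i) (hS3 : ∀ i ∈ S, i - 1 ∉ S) :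
    S.card ≤ m := by
  have := Finset.card_le_card_of_injOn (fun i => (i - 1) / 2)
    (fun i hi => by
      show (i - 1) / 2 ∈ Finset.range m
      rw [Finset.mem_range]
      have := hS1 i hi; have := hS2 i hi; omega)
    (s := S) (t := Finset.range m)
    (by
      intro i hi j hj hij
      simp only at hij
      by_contra hne
      have h2i := hS2 i hi; have h2j := hS2 j hj
      rcases Nat.lt_or_ge i j with h | h
      · exact noconsec hS2 hS3 hi hj (by omega)
      · exact noconsec hS2 hS3 hj hi (by omega))
  simpa using this

lemma card_le_half_sub_of_miss {m : ℕ} (S : Finset ℕ) (t : ℕ) (ht : t < m)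
    (hS1 : ∀ i ∈ S, i < 2 * m) (hS2 : ∀ i ∈ S, 1 ≤ i) (hS3 : ∀ i ∈ S, i - 1 ∉ S)
    (hmiss : ∀ i ∈ S, (i - 1) / 2 ≠ t) :
    S.card ≤ m - 1 := by
  have := Finset.card_le_card_of_injOn (fun i => (i - 1) / 2)
    (fun i hi => by
      show (i - 1) / 2 ∈ (Finset.range m).erase t
      rw [Finset.mem_erase, Finset.mem_range]
      refine ⟨hmiss i hi, ?_⟩
      have := hS1 i hi; have := hS2 i hi; omega)
    (s := S) (t := (Finset.range m).erase t)
    (by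
      intro i hi j hj hij
      simp only at hij
      by_contra hne
      have h2i := hS2 i hi; have h2j := hS2 j hj
      rcases Nat.lt_or_ge i j with h | h
      · exact noconsec hS2 hS3 hi hj (by omega)
      · exact noconsec hS2 hS3 hj hi (by omega))
  rw [Finset.card_erase_of_mem (Finset.mem_range.mpr ht), Finset.card_range] at this
  exact this

lemma card_le_half_sub_of_even {m : ℕ} (S : Finset ℕ) (q : ℕ) (hq : q ∈ S) (hqe : q % 2 = 0)
    (hS1 : ∀ i ∈ S, i < 2 * m) (hS2 : ∀ i ∈ S, 1 ≤ i) (hS3 : ∀ i ∈ S, i - 1 ∉ S) :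
    S.card ≤ m - 1 := by
  have hq2 : 2 ≤ q := by have := hS2 q hq; omega
  have hqm : q < 2 * m := hS1 q hq
  have hkey : ∀ i ∈ S, i ≠ q - 1 := by
    intro i hi he
    exact hS3 q hq (he ▸ hi)
  have := Finset.card_le_card_of_injOn (fun i => if i < q then (i - 1) / 2 else i / 2)
    (fun i hi => by
      show (if i < q then (i - 1) / 2 else i / 2) ∈ (Finset.range m).erase (q / 2 - 1)
      rw [Finset.mem_erase, Finset.mem_range]
      have hi1 := hS1 i hi; have hi2 := hS2 i hi; have hi3 := hkey i hi
      constructor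
      · split <;> omega
      · split <;> omega)
    (s := S) (t := (Finset.range m).erase (q / 2 - 1))
    (by
      intro i hi j hj hij
      simp only at hij
      by_contra hne
      have hi1 := hS1 i hi; have hi2 := hS2 i hi; have hi3 := hkey i hi
      have hj1 := hS1 j hj; have hj2 := hS2 j hj; have hj3 := hkey j hj
      rcases Nat.lt_or_ge i j with h | h
      · refine noconsec hS2 hS3 hi hj ?_
        split at hij <;> split at hij <;> omega
      · refine noconsec hS2 hS3 hj hi ?_
        split at hij <;> split at hij <;> omega)
  rw [Finset.card_erase_of_mem (Finset.mem_range.mpr (by omega)), Finset.card_range] at this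
  exact this

end MetAux


namespace MetAux

variable {a n : ℕ}

lemma natdist (x y : ℕ) : Nat.dist x y = (x - y) + (y - x) := rfl

/-- Upper bound `l1 v u ≤ (n/2) * a` for `v` in the candidate center set. -/
lemma ub_center {m e : ℕ} (hae : a = 2 * e + 1) (hnm : n = 2 * m)
    (v : MetallicVertex a n)
    (hU1 : ∀ i, i < n → ext v i = e ∨ (ext v i = e + 1 ∧ i % 2 = 1) ∨
      (ext v i + 1 = e ∧ i % 2 = 0))
    (hU2 : ∀ i j, i < n → j < n → ext v i ≠ e → ext v j ≠ e → i = j)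
    (u : MetallicVertex a n) : l1 v u ≤ m * a := by
  classical
  have ha : 1 ≤ a := by omega
  set S : Finset ℕ := (Finset.range n).filter (fun i => ext u i = a) with hS
  have hmemS : ∀ i, i ∈ S ↔ i < n ∧ ext u i = a := by
    intro i; simp [hS, Finset.mem_filter, Finset.mem_range]
  have hS1 : ∀ i ∈ S, i < n := fun i hi => ((hmemS i).mp hi).1
  have hS2 : ∀ i ∈ S, 1 ≤ i := by
    intro i hi
    exact (ext_ok u i ((hmemS i).mp hi).2 ha).1
  have hS3 : ∀ i ∈ S, i - 1 ∉ S := by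
    intro i hi hcon
    have h0 := (ext_ok u i ((hmemS i).mp hi).2 ha).2
    have := ((hmemS (i-1)).mp hcon).2
    omega
  have hS1' : ∀ i ∈ S, i < 2 * m := fun i hi => hnm ▸ hS1 i hi
  have hcard : S.card ≤ m := card_le_half S hS1' hS2 hS3
  set B : ℕ → ℕ := fun i => e + (if i ∈ S then 1 else 0) with hB
  set D : ℕ → ℕ := fun i => Nat.dist (ext v i) (ext u i) with hD
  have hl1 : l1 v u = ∑ i ∈ Finset.range n, D i := l1_eq_sum_range v u
  have hsumB : ∑ i ∈ Finset.range n, B i = n * e + S.card := by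
    rw [hB]
    rw [Finset.sum_add_distrib, Finset.sum_const, Finset.card_range, smul_eq_mul]
    congr 1
    rw [Finset.sum_ite_mem]
    have h : Finset.range n ∩ S = S :=
      Finset.inter_eq_right.mpr (fun i hi => Finset.mem_range.mpr (hS1 i hi))
    rw [h, Finset.sum_const, smul_eq_mul, mul_one]
  have hgoal : m * a = n * e + m := by rw [hae, hnm]; ring
  -- pointwise bound at unperturbed positions
  have hDle : ∀ i, i < n → ext v i = e → D i ≤ B i := by
    intro i hi hvi
    rw [hD, hB]
    simp only [natdist]
    have h1 := ext_le u i
    by_cases hiS : i ∈ S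
    · have h2 := ((hmemS i).mp hiS).2
      rw [if_pos hiS]; omega
    · have h2 : ext u i ≠ a := by
        intro hcon; exact hiS ((hmemS i).mpr ⟨hi, hcon⟩)
      rw [if_neg hiS]; omega
  by_cases hp : ∀ i, i < n → ext v i = e
  · -- no perturbed position
    have : ∑ i ∈ Finset.range n, D i ≤ ∑ i ∈ Finset.range n, B i :=
      Finset.sum_le_sum fun i hi => hDle i (Finset.mem_range.mp hi) (hp i (Finset.mem_range.mp hi))
    omega
  · push_neg at hp
    obtain ⟨p, hpn, hpv⟩ := hp
    have hpmem : p ∈ Finset.range n := Finset.mem_range.mpr hpn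
    have hsplitD := Finset.sum_erase_add (Finset.range n) D hpmem
    have hsplitB := Finset.sum_erase_add (Finset.range n) B hpmem
    have herase : ∑ i ∈ (Finset.range n).erase p, D i ≤ ∑ i ∈ (Finset.range n).erase p, B i := by
      apply Finset.sum_le_sum
      intro i hi
      have hin : i < n := Finset.mem_range.mp (Finset.mem_of_mem_erase hi)
      refine hDle i hin ?_
      by_contra hne
      exact Finset.ne_of_mem_erase hi (hU2 i p hin hpn hne hpv)
    have hBp : B p = e + (if p ∈ S then 1 else 0) := rfl
    have hvp := hU1 p hpn
    have hua : ∀ i, i < n → i ∉ S → ext u i ≤ 2 * e := by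
      intro i hi hiS
      have h1 := ext_le u i
      have h2 : ext u i ≠ a := fun hcon => hiS ((hmemS i).mpr ⟨hi, hcon⟩)
      omega
    -- in every case we bound `D p` and obtain a suitable card estimate
    rcases hvp with hv0 | ⟨hv1, hodd⟩ | ⟨hv2, heven⟩
    · exact absurd hv0 hpv
    · -- p odd, v p = e + 1
      by_cases hpS : p ∈ S
      · have hDp : D p = e := by
          have := ((hmemS p).mp hpS).2
          rw [hD]; simp only [natdist]; omega
        rw [if_pos hpS] at hBp
        omega
      · have hDp : D p ≤ e + 1 := by
          have := hua p hpn hpS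
          rw [hD]; simp only [natdist]; omega
        rw [if_neg hpS] at hBp
        have hcard1 : S.card ≤ m - 1 := by
          by_cases hq : p + 1 ∈ S
          · exact card_le_half_sub_of_even S (p+1) hq (by omega) hS1' hS2 hS3
          · apply card_le_half_sub_of_miss S ((p-1)/2) (by omega) hS1' hS2 hS3
            intro i hi hcon
            have := hS2 i hi
            have : i = p ∨ i = p + 1 := by omega
            rcases this with h | h
            · exact hpS (h ▸ hi)
            · exact hq (h ▸ hi)
        have hm1 : 1 ≤ m := by omega
        omega
    · -- p even, v p = e - 1 (i.e. v p + 1 = e)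
      by_cases hpS : p ∈ S
      · have hDp : D p = e + 2 := by
          have := ((hmemS p).mp hpS).2
          rw [hD]; simp only [natdist]; omega
        rw [if_pos hpS] at hBp
        have hcard1 : S.card ≤ m - 1 :=
          card_le_half_sub_of_even S p hpS heven hS1' hS2 hS3
        have hm1 : 1 ≤ m := by omega
        omega
      · by_cases hq : p + 1 ∈ S
        · have hu0 : ext u p = 0 := by
            have h0 := (ext_ok u (p+1) ((hmemS (p+1)).mp hq).2 ha).2
            simpa using h0
          have hDp : D p + 1 = e := by
            simp only [hD, hu0, natdist]; omega
          rw [if_neg hpS] at hBp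
          omega
        · have hDp : D p ≤ e + 1 := by
            have := hua p hpn hpS
            rw [hD]; simp only [natdist]; omega
          rw [if_neg hpS] at hBp
          have hcard1 : S.card ≤ m - 1 := by
            by_cases hq2 : p + 2 ∈ S
            · exact card_le_half_sub_of_even S (p+2) hq2 (by omega) hS1' hS2 hS3
            · apply card_le_half_sub_of_miss S (p/2) (by omega) hS1' hS2 hS3
              intro i hi hcon
              have := hS2 i hi
              have : i = p + 1 ∨ i = p + 2 := by omega
              rcases this with h | h
              · exact hq (h ▸ hi)
              · exact hq2 (h ▸ hi)
          have hm1 : 1 ≤ m := by omega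
          omega

end MetAux


namespace MetAux

variable {a n : ℕ}

/-- Generic construction: a vertex built from pair patterns realizes the pairwise sum. -/
lemma lb_generic {m : ℕ} (hnm : n = 2 * m) (v : MetallicVertex a n)
    (P : ℕ → ℕ × ℕ)
    (hle : ∀ k, (P k).1 ≤ a ∧ (P k).2 ≤ a)
    (h1 : ∀ k, (P k).1 = a → 1 ≤ k ∧ (P (k - 1)).2 = 0)
    (h2 : ∀ k, (P k).2 = a → (P k).1 = 0) :
    ∃ u : MetallicVertex a n, l1 v u =
      ∑ k ∈ Finset.range m, (Nat.dist (ext v (2 * k)) (P k).1 +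
        Nat.dist (ext v (2 * k + 1)) (P k).2) := by
  have hfle : ∀ i, pairFun P i ≤ a := by
    intro i
    unfold pairFun
    split
    · exact (hle _).1
    · exact (hle _).2
  refine ⟨mk (pairFun P) hfle (pairFun_ok P h1 h2), ?_⟩
  rw [l1_eq_sum_range]
  have hcongr : ∀ i ∈ Finset.range n,
      Nat.dist (ext v i) (ext (mk (a := a) (n := n) (pairFun P) hfle
        (pairFun_ok (a := a) (n := n) P h1 h2)) i) =
      Nat.dist (ext v i) (pairFun P i) := by
    intro i hi
    rw [ext_mk (a := a) (n := n) (pairFun P) hfle (pairFun_ok (a := a) (n := n) P h1 h2)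
      i (Finset.mem_range.mp hi)]
  rw [Finset.sum_congr rfl hcongr,
    show Finset.range n = Finset.range (2 * m) by rw [hnm],
    sum_pair (fun i => Nat.dist (ext v i) (pairFun P i)) m]
  apply Finset.sum_congr rfl
  intro k _
  rw [pairFun_even, pairFun_odd]

/-- The default pattern. -/
def dflt (v : MetallicVertex a n) : ℕ → ℕ × ℕ := fun k =>
  if ext v (2 * k + 1) ≤ ext v (2 * k) then (0, a) else (a - 1, 0)

lemma dflt_le (ha : 1 ≤ a) (v : MetallicVertex a n) (k : ℕ) :
    (dflt v k).1 ≤ a ∧ (dflt v k).2 ≤ a := by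
  unfold dflt; split <;> exact ⟨by omega, by omega⟩

lemma dflt_not_a (ha : 1 ≤ a) (v : MetallicVertex a n) (k : ℕ) : (dflt v k).1 ≠ a := by
  unfold dflt; split <;> simp <;> omega

lemma dflt_ok (v : MetallicVertex a n) (k : ℕ) : (dflt v k).2 = a → (dflt v k).1 = 0 := by
  unfold dflt; split
  · intro _; rfl
  · intro h; simp at h; omega

lemma dflt_ge (ha : 1 ≤ a) (v : MetallicVertex a n) (k : ℕ) :
    a ≤ Nat.dist (ext v (2 * k)) (dflt v k).1 + Nat.dist (ext v (2 * k + 1)) (dflt v k).2 := by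
  have h1 := ext_le v (2 * k)
  have h2 := ext_le v (2 * k + 1)
  unfold dflt
  rcases le_or_gt (ext v (2 * k + 1)) (ext v (2 * k)) with h | h
  · rw [if_pos h]; simp only [natdist]; omega
  · rw [if_neg (not_le.mpr h)]; simp only [natdist]; omega

/-- Every vertex has some vertex at ℓ¹ distance at least `m * a`. -/
lemma lb_all {m : ℕ} (ha : 1 ≤ a) (hnm : n = 2 * m) (v : MetallicVertex a n) :
    ∃ u : MetallicVertex a n, m * a ≤ l1 v u := by
  obtain ⟨u, hu⟩ := lb_generic hnm v (dflt v) (dflt_le ha v)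
    (fun k hk => absurd hk (dflt_not_a ha v k)) (dflt_ok v)
  refine ⟨u, ?_⟩
  rw [hu]
  calc m * a = ∑ _k ∈ Finset.range m, a := by
        rw [Finset.sum_const, Finset.card_range, smul_eq_mul]
    _ ≤ _ := Finset.sum_le_sum fun k _ => dflt_ge ha v k

/-- If `v` is not in the candidate center set, some vertex is at ℓ¹ distance
at least `m * a + 1`. -/
lemma lb_notU {m e : ℕ} (hae : a = 2 * e + 1) (hnm : n = 2 * m) (hm1 : 1 ≤ m)
    (v : MetallicVertex a n)
    (hnot : ¬((∀ i, i < n → ext v i = e ∨ (ext v i = e + 1 ∧ i % 2 = 1) ∨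
        (ext v i + 1 = e ∧ i % 2 = 0)) ∧
      (∀ i j, i < n → j < n → ext v i ≠ e → ext v j ≠ e → i = j))) :
    ∃ u : MetallicVertex a n, m * a + 1 ≤ l1 v u := by
  have ha : 1 ≤ a := by omega
  by_cases hA : ∀ k, k < m → (ext v (2*k) = e ∧ ext v (2*k+1) = e) ∨
      (ext v (2*k) = e ∧ ext v (2*k+1) = e + 1) ∨
      (ext v (2*k) + 1 = e ∧ ext v (2*k+1) = e)
  · -- all pairs are of the three central types; there must be two perturbed pairs
    have hU1 : ∀ i, i < n → ext v i = e ∨ (ext v i = e + 1 ∧ i % 2 = 1) ∨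
        (ext v i + 1 = e ∧ i % 2 = 0) := by
      intro i hi
      have hg := hA (i / 2) (by omega)
      by_cases hpar : i % 2 = 0
      · rw [show 2 * (i / 2) = i by omega] at hg
        rcases hg with ⟨h, _⟩ | ⟨h, _⟩ | ⟨h, _⟩
        · exact Or.inl h
        · exact Or.inl h
        · exact Or.inr (Or.inr ⟨h, hpar⟩)
      · rw [show 2 * (i / 2) + 1 = i by omega] at hg
        rcases hg with ⟨_, h⟩ | ⟨_, h⟩ | ⟨_, h⟩
        · exact Or.inl h
        · exact Or.inr (Or.inl ⟨h, by omega⟩)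
        · exact Or.inl h
    have hU2 : ¬(∀ i j, i < n → j < n → ext v i ≠ e → ext v j ≠ e → i = j) := by
      intro hcon; exact hnot ⟨hU1, hcon⟩
    push_neg at hU2
    obtain ⟨i, j, hi, hj, hvi, hvj, hij⟩ := hU2
    have hperturb : ∀ i', i' < n → ext v i' ≠ e →
        (ext v (2*(i'/2)) = e ∧ ext v (2*(i'/2)+1) = e + 1) ∨
        (ext v (2*(i'/2)) + 1 = e ∧ ext v (2*(i'/2)+1) = e) := by
      intro i' hi' hvi'
      have hg := hA (i'/2) (by omega)
      by_cases hpar : i' % 2 = 0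
      · rcases hg with ⟨h, _⟩ | hg | hg
        · exfalso; apply hvi'; rw [show 2 * (i'/2) = i' by omega] at h; exact h
        · exact Or.inl hg
        · exact Or.inr hg
      · rcases hg with ⟨_, h⟩ | hg | hg
        · exfalso; apply hvi'; rw [show 2 * (i'/2) + 1 = i' by omega] at h; exact h
        · exact Or.inl hg
        · exact Or.inr hg
    have h1 := hperturb i hi hvi
    have h2 := hperturb j hj hvj
    have hne_pair : i / 2 ≠ j / 2 := by
      intro hcon
      have hcases : (i = 2*(i/2) ∧ j = 2*(i/2)+1) ∨ (j = 2*(i/2) ∧ i = 2*(i/2)+1) := by omega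
      rw [← hcon] at h2
      rcases hcases with ⟨q1, q2⟩ | ⟨q1, q2⟩
      · rw [q1] at hvi; rw [q2] at hvj
        rcases h1 with ⟨p1, p2⟩ | ⟨p1, p2⟩ <;> omega
      · rw [q1] at hvj; rw [q2] at hvi
        rcases h1 with ⟨p1, p2⟩ | ⟨p1, p2⟩ <;> omega
    -- name the two perturbed pairs
    have hwlog : ∃ j2 k2, j2 < k2 ∧ k2 < m ∧
        ((ext v (2*j2) = e ∧ ext v (2*j2+1) = e + 1) ∨
          (ext v (2*j2) + 1 = e ∧ ext v (2*j2+1) = e)) ∧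
        ((ext v (2*k2) = e ∧ ext v (2*k2+1) = e + 1) ∨
          (ext v (2*k2) + 1 = e ∧ ext v (2*k2+1) = e)) := by
      rcases Nat.lt_or_ge (i/2) (j/2) with h | h
      · exact ⟨i/2, j/2, h, by omega, h1, h2⟩
      · exact ⟨j/2, i/2, by omega, by omega, h2, h1⟩
    obtain ⟨j2, k2, hj2k2, hk2m, hPertj2, hPertk2⟩ := hwlog
    -- chain construction
    set P : ℕ → ℕ × ℕ := fun t => if t ≤ k2 then (if t = 0 then (a - 1, 0) else (a, 0))
      else dflt v t with hP
    obtain ⟨u, hu⟩ := lb_generic hnm v P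
      (by
        intro k; simp only [hP]
        split
        · split <;> exact ⟨by omega, by omega⟩
        · exact dflt_le ha v k)
      (by
        intro k; simp only [hP]
        split
        · next hk =>
          split
          · next hk0 => intro hcon; simp at hcon; omega
          · next hk0 =>
            intro _
            refine ⟨by omega, ?_⟩
            rw [if_pos (by omega : k - 1 ≤ k2)]
            split <;> rfl
        · next hk =>
          intro hcon
          exact absurd hcon (dflt_not_a ha v k))
      (by
        intro k; simp only [hP]
        split
        · split <;> (intro hcon; simp at hcon; omega)
        · exact dflt_ok v k)
    refine ⟨u, ?_⟩
    rw [hu]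
    have hpoint : ∀ k ∈ Finset.range m,
        a + ((if k = k2 then 1 else 0) + (if k = j2 then 1 else 0)) ≤
          (Nat.dist (ext v (2*k)) (P k).1 + Nat.dist (ext v (2*k+1)) (P k).2) +
            (if k = 0 then 1 else 0) := by
      intro k hk
      have hkm : k < m := Finset.mem_range.mp hk
      have hg := hA k hkm
      simp only [hP]
      by_cases hkk2 : k ≤ k2
      · rw [if_pos hkk2]
        by_cases hk0 : k = 0
        · rw [if_pos hk0, if_pos hk0]
          rw [if_neg (show k ≠ k2 by omega)]
          by_cases hkj2 : k = j2
          · rw [if_pos hkj2]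
            have hp := hkj2 ▸ hPertj2
            simp only [natdist]
            rcases hp with ⟨p1, p2⟩ | ⟨p1, p2⟩ <;> omega
          · rw [if_neg hkj2]
            simp only [natdist]
            rcases hg with ⟨p1, p2⟩ | ⟨p1, p2⟩ | ⟨p1, p2⟩ <;> omega
        · rw [if_neg hk0, if_neg hk0]
          by_cases hkk2' : k = k2
          · rw [if_pos hkk2', if_neg (show k ≠ j2 by omega)]
            have hp := hkk2' ▸ hPertk2
            simp only [natdist]
            rcases hp with ⟨p1, p2⟩ | ⟨p1, p2⟩ <;> omega
          · rw [if_neg hkk2']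
            by_cases hkj2 : k = j2
            · rw [if_pos hkj2]
              have hp := hkj2 ▸ hPertj2
              simp only [natdist]
              rcases hp with ⟨p1, p2⟩ | ⟨p1, p2⟩ <;> omega
            · rw [if_neg hkj2]
              simp only [natdist]
              rcases hg with ⟨p1, p2⟩ | ⟨p1, p2⟩ | ⟨p1, p2⟩ <;> omega
      · rw [if_neg hkk2]
        rw [if_neg (show k ≠ k2 by omega), if_neg (show k ≠ j2 by omega),
          if_neg (show k ≠ 0 by omega)]
        have := dflt_ge ha v k
        omega
    have hsum := Finset.sum_le_sum hpoint
    rw [Finset.sum_add_distrib, Finset.sum_add_distrib, Finset.sum_add_distrib] at hsum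
    have e1 : ∑ k ∈ Finset.range m, (if k = k2 then 1 else 0) = 1 := by
      rw [Finset.sum_ite_eq' (Finset.range m) k2 (fun _ => 1),
        if_pos (Finset.mem_range.mpr hk2m)]
    have e2 : ∑ k ∈ Finset.range m, (if k = j2 then 1 else 0) = 1 := by
      rw [Finset.sum_ite_eq' (Finset.range m) j2 (fun _ => 1),
        if_pos (Finset.mem_range.mpr (by omega))]
    have e3 : ∑ k ∈ Finset.range m, (if k = 0 then 1 else 0) = 1 := by
      rw [Finset.sum_ite_eq' (Finset.range m) 0 (fun _ => 1),
        if_pos (Finset.mem_range.mpr (by omega))]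
    have e4 : ∑ _k ∈ Finset.range m, a = m * a := by
      rw [Finset.sum_const, Finset.card_range, smul_eq_mul]
    rw [e1, e2, e3, e4] at hsum
    omega
  · -- some pair admits a pattern exceeding `a`
    push_neg at hA
    obtain ⟨k0, hk0m, hbad⟩ := hA
    have hXk := ext_le v (2*k0)
    have hYk := ext_le v (2*k0+1)
    have hcase : ext v (2*k0) > ext v (2*k0+1) ∨ ext v (2*k0+1) ≥ ext v (2*k0) + 2 ∨
        ext v (2*k0) + ext v (2*k0+1) ≥ a + 1 ∨
        ext v (2*k0) + ext v (2*k0+1) + 3 ≤ a := by omega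
    have hchoice : ∃ s t : ℕ, s ≤ a ∧ t ≤ a ∧ s ≠ a ∧ (t = a → s = 0) ∧
        a + 1 ≤ Nat.dist (ext v (2*k0)) s + Nat.dist (ext v (2*k0+1)) t := by
      rcases hcase with h | h | h | h
      · exact ⟨0, a, by omega, le_rfl, by omega, fun _ => rfl, by simp only [natdist]; omega⟩
      · exact ⟨a - 1, 0, by omega, by omega, by omega, by omega, by simp only [natdist]; omega⟩
      · exact ⟨0, 0, by omega, by omega, by omega, by omega, by simp only [natdist]; omega⟩
      · exact ⟨a - 1, a - 1, by omega, by omega, by omega, by omega,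
          by simp only [natdist]; omega⟩
    obtain ⟨s, t, hs, ht, hsa, hta, hst⟩ := hchoice
    set P : ℕ → ℕ × ℕ := fun k => if k = k0 then (s, t) else dflt v k with hP
    obtain ⟨u, hu⟩ := lb_generic hnm v P
      (by intro k; simp only [hP]; split
          · exact ⟨hs, ht⟩
          · exact dflt_le ha v k)
      (by intro k; simp only [hP]; split
          · intro hcon; exact absurd hcon hsa
          · intro hcon; exact absurd hcon (dflt_not_a ha v k))
      (by intro k; simp only [hP]; split
          · exact hta
          · exact dflt_ok v k)
    refine ⟨u, ?_⟩
    rw [hu]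
    have hpoint : ∀ k ∈ Finset.range m,
        a + (if k = k0 then 1 else 0) ≤
          Nat.dist (ext v (2*k)) (P k).1 + Nat.dist (ext v (2*k+1)) (P k).2 := by
      intro k _
      simp only [hP]
      by_cases hkk : k = k0
      · rw [if_pos hkk, if_pos hkk, hkk]
        exact hst
      · rw [if_neg hkk, if_neg hkk]
        have := dflt_ge ha v k
        omega
    have hsum := Finset.sum_le_sum hpoint
    rw [Finset.sum_add_distrib] at hsum
    have e1 : ∑ k ∈ Finset.range m, (if k = k0 then 1 else 0) = 1 := by
      rw [Finset.sum_ite_eq' (Finset.range m) k0 (fun _ => 1),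
        if_pos (Finset.mem_range.mpr hk0m)]
    have e4 : ∑ _k ∈ Finset.range m, a = m * a := by
      rw [Finset.sum_const, Finset.card_range, smul_eq_mul]
    rw [e1, e4] at hsum
    omega

end MetAux


namespace MetAux

variable {a n : ℕ}

lemma ecc_eq (w : MetallicVertex a n) : ecc a n w = Finset.univ.sup fun u => l1 w u := by
  unfold ecc
  exact Finset.sup_congr rfl (fun u _ => dist_eq w u)

lemma le_ecc (w u : MetallicVertex a n) : l1 w u ≤ ecc a n w := by
  rw [ecc_eq w]; exact Finset.le_sup (Finset.mem_univ u)

lemma ecc_le (w : MetallicVertex a n) (N : ℕ) (h : ∀ u, l1 w u ≤ N) : ecc a n w ≤ N := by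
  rw [ecc_eq w]; exact Finset.sup_le fun u _ => h u

lemma ext_fin (v : MetallicVertex a n) (j : Fin n) : ext v (j : ℕ) = (v.1 j : ℕ) := by
  unfold ext; rw [dif_pos j.2]

end MetAux

/-- for `a` odd and `n ≥ 2` even, the center of `Π^a_n` equals `U^a_n`,
the set of vertices agreeing with `ε̂` (with `ε = ⌊a/2⌋`) everywhere except possibly at
one position, where the letter is `ε+1` at an even (1-indexed) position, i.e. odd
0-indexed position, or `ε−1` at an odd (1-indexed) position, i.e. even 0-indexed
position. -/
theorem metallic_center_odd_even (a n : ℕ) (ha : 1 ≤ a) (hao : Odd a)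
    (hn : 2 ≤ n) (hne : Even n) :
    ∀ v : MetallicVertex a n,
      (∀ u : MetallicVertex a n, ecc a n v ≤ ecc a n u) ↔
        ((∀ j : Fin n,
            (v.1 j : ℕ) = a / 2 ∨
            ((v.1 j : ℕ) = a / 2 + 1 ∧ (j : ℕ) % 2 = 1) ∨
            ((v.1 j : ℕ) + 1 = a / 2 ∧ (j : ℕ) % 2 = 0)) ∧
          ∀ j k : Fin n,
            (v.1 j : ℕ) ≠ a / 2 → (v.1 k : ℕ) ≠ a / 2 → j = k) := by
  classical
  open MetAux in
  have hae : a = 2 * (a / 2) + 1 := by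
    have := Nat.odd_iff.mp hao; omega
  have hnev := Nat.even_iff.mp hne
  have hnm : n = 2 * (n / 2) := by omega
  have hm1 : 1 ≤ n / 2 := by omega
  set e := a / 2 with he
  set m := n / 2 with hm
  -- the all-e vertex
  have hv0ok : ∀ i, i < n → (fun _ : ℕ => e) i = a → 1 ≤ i ∧ (fun _ : ℕ => e) (i - 1) = 0 := by
    intro i _ hia
    exfalso
    have h : e = a := hia
    omega
  set v₀ : MetallicVertex a n := mk (fun _ => e) (fun _ => by show e ≤ a; omega) hv0ok with hv₀
  have hv₀ext : ∀ i, i < n → ext v₀ i = e := by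
    intro i hi
    rw [hv₀, ext_mk (fun _ => e) (fun _ => by show e ≤ a; omega) hv0ok i hi]
  have hecc₀ : ecc a n v₀ ≤ m * a := by
    apply ecc_le
    intro u
    apply ub_center hae hnm v₀ (fun i hi => Or.inl (hv₀ext i hi))
      (fun i j hi hj h1 _ => absurd (hv₀ext i hi) h1) u
  intro v
  -- translation between the Fin-indexed and ℕ-indexed conditions
  have hext := fun (j : Fin n) => ext_fin v j
  have htrans : ((∀ j : Fin n,
        (v.1 j : ℕ) = e ∨ ((v.1 j : ℕ) = e + 1 ∧ (j : ℕ) % 2 = 1) ∨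
          ((v.1 j : ℕ) + 1 = e ∧ (j : ℕ) % 2 = 0)) ∧
      ∀ j k : Fin n, (v.1 j : ℕ) ≠ e → (v.1 k : ℕ) ≠ e → j = k) ↔
      ((∀ i, i < n → ext v i = e ∨ (ext v i = e + 1 ∧ i % 2 = 1) ∨
          (ext v i + 1 = e ∧ i % 2 = 0)) ∧
        (∀ i j, i < n → j < n → ext v i ≠ e → ext v j ≠ e → i = j)) := by
    constructor
    · rintro ⟨h1, h2⟩
      constructor
      · intro i hi
        have hexti : ext v i = ((v.1 ⟨i, hi⟩ : Fin (a+1)) : ℕ) := hext ⟨i, hi⟩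
        rw [hexti]
        exact h1 ⟨i, hi⟩
      · intro i j hi hj hvi hvj
        have hexti : ext v i = ((v.1 ⟨i, hi⟩ : Fin (a+1)) : ℕ) := hext ⟨i, hi⟩
        have hextj : ext v j = ((v.1 ⟨j, hj⟩ : Fin (a+1)) : ℕ) := hext ⟨j, hj⟩
        rw [hexti] at hvi
        rw [hextj] at hvj
        exact congrArg Fin.val (h2 ⟨i, hi⟩ ⟨j, hj⟩ hvi hvj)
    · rintro ⟨h1, h2⟩
      constructor
      · intro j
        have := h1 (j : ℕ) j.2
        rw [hext j] at this
        exact this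
      · intro j k hvj hvk
        apply Fin.ext
        exact h2 (j : ℕ) (k : ℕ) j.2 k.2 (by rw [hext j]; exact hvj)
          (by rw [hext k]; exact hvk)
  constructor
  · intro hmin
    by_contra hvU
    have hnot := (not_iff_not.mpr htrans).mp hvU
    obtain ⟨u0, hu0⟩ := lb_notU hae hnm hm1 v hnot
    have h1 : m * a + 1 ≤ ecc a n v := le_trans hu0 (le_ecc v u0)
    have h2 : ecc a n v ≤ ecc a n v₀ := hmin v₀
    omega
  · intro hRHS u
    have hNat := htrans.mp hRHS
    have hv : ecc a n v ≤ m * a := ecc_le _ _ (ub_center hae hnm v hNat.1 hNat.2)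
    obtain ⟨u', hu'⟩ := lb_all (by omega) hnm u
    exact le_trans hv (le_trans hu' (le_ecc u u'))
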